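/- Let ω ∈ ℝ \ {0} and let W : ℝ → ℝ be continuous with ∫_ℝ |W(s)| ds < ∞. Then there exists a twice continuously differentiable function η : ℝ → ℂ solving η''(s) + ω²η(s) = W(s)η(s) for all s ∈ ℝ and satisfying the Jost boundary conditions at −∞: lim_{s→−∞} e^{iωs}η(s) = 1 and lim_{s→−∞} (e^{iωs}η(s))' = 0. -/

import Mathlib

open Set Filter MeasureTheory Topology

set_option linter.unusedSectionVars false
set_option maxHeartbeats 1000000
section helpers
variable {E : Type*} [NormedAddCommGroup E] [NormedSpace ℝ E] [CompleteSpace E]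

lemma primitive_split (F : ℝ → E) (hF : Integrable F) (a s : ℝ) :
    (∫ t in Iic s, F t) = (∫ t in Iic a, F t) + ∫ t in a..s, F t := by
  rw [← intervalIntegral.integral_Iic_sub_Iic hF.integrableOn hF.integrableOn]
  abel

lemma primitive_hasDerivAt (F : ℝ → E) (hF : Integrable F) (hFc : Continuous F) (s : ℝ) :
    HasDerivAt (fun x => ∫ t in Iic x, F t) (F s) s := by
  have h : HasDerivAt (fun x => (∫ t in Iic (0:ℝ), F t) + ∫ t in (0:ℝ)..x, F t) (F s) s :=
    (intervalIntegral.integral_hasDerivAt_right (hF.intervalIntegrable)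
      (hFc.stronglyMeasurable.stronglyMeasurableAtFilter) hFc.continuousAt).const_add _
  exact h.congr_of_eventuallyEq (Eventually.of_forall fun x => primitive_split F hF 0 x)

lemma primitive_continuous (F : ℝ → E) (hF : Integrable F) (hFc : Continuous F) :
    Continuous (fun x => ∫ t in Iic x, F t) :=
  continuous_iff_continuousAt.2 fun s => (primitive_hasDerivAt F hF hFc s).continuousAt

lemma primitive_tendsto_atBot (F : ℝ → E) (hF : Integrable F) :
    Tendsto (fun s => ∫ t in Iic s, F t) atBot (𝓝 0) := by
  have h := MeasureTheory.intervalIntegral_tendsto_integral_Iic (0:ℝ) hF.integrableOn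
    (tendsto_id (α := ℝ))
  have he : (fun s : ℝ => ∫ t in Iic s, F t)
      = fun s => (∫ t in Iic (0:ℝ), F t) - ∫ t in s..(0:ℝ), F t := by
    funext s
    rw [← intervalIntegral.integral_Iic_sub_Iic hF.integrableOn hF.integrableOn]
    abel
  rw [he]
  have := (tendsto_const_nhds (x := ∫ t in Iic (0:ℝ), F t) (f := atBot (α := ℝ))).sub h
  simpa using this

end helpers

section mu
variable (ω : ℝ) (W : ℝ → ℝ)

noncomputable def jg (t : ℝ) : ℝ := |W t| / |ω|
noncomputable def jmu (s : ℝ) : ℝ := ∫ t in Iic s, jg ω W t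

variable (hω : ω ≠ 0) (hWc : Continuous W) (hWi : Integrable W)
include hω hWc hWi

lemma jg_cont : Continuous (jg ω W) := (hWc.abs).div_const _
lemma jg_int : Integrable (jg ω W) := hWi.abs.div_const _
lemma jg_nonneg : ∀ t, 0 ≤ jg ω W t := fun t => div_nonneg (abs_nonneg _) (abs_nonneg _)

lemma jmu_nonneg : ∀ s, 0 ≤ jmu ω W s := fun s =>
  setIntegral_nonneg measurableSet_Iic fun t _ => jg_nonneg ω W hω hWc hWi t

lemma jmu_hasDerivAt : ∀ s, HasDerivAt (jmu ω W) (jg ω W s) s := fun s =>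
  primitive_hasDerivAt _ (jg_int ω W hω hWc hWi) (jg_cont ω W hω hWc hWi) s

lemma jmu_cont : Continuous (jmu ω W) :=
  continuous_iff_continuousAt.2 fun s => (jmu_hasDerivAt ω W hω hWc hWi s).continuousAt

lemma jmu_tendsto_atBot : Tendsto (jmu ω W) atBot (𝓝 0) :=
  primitive_tendsto_atBot _ (jg_int ω W hω hWc hWi)

lemma jmu_le : ∀ s, jmu ω W s ≤ ∫ t, jg ω W t := fun s =>
  setIntegral_le_integral (jg_int ω W hω hWc hWi)
    (Eventually.of_forall fun t => jg_nonneg ω W hω hWc hWi t)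

lemma jge_cont : Continuous (fun t => Real.exp (2 * jmu ω W t) * jg ω W t) :=
  (Real.continuous_exp.comp (continuous_const.mul (jmu_cont ω W hω hWc hWi))).mul (jg_cont ω W hω hWc hWi)

lemma jge_int : Integrable (fun t => Real.exp (2 * jmu ω W t) * jg ω W t) := by
  refine (jg_int ω W hω hWc hWi).bdd_mul (c := Real.exp (2 * ∫ t, jg ω W t)) ?_ ?_
  · exact (Real.continuous_exp.comp (continuous_const.mul (jmu_cont ω W hω hWc hWi))).aestronglyMeasurable
  · refine ae_of_all _ fun t => ?_
    rw [Real.norm_eq_abs, abs_of_pos (Real.exp_pos _)]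
    exact Real.exp_le_exp.2 (by linarith [jmu_le ω W hω hWc hWi t])

lemma jge_key (s : ℝ) :
    (∫ t in Iic s, Real.exp (2 * jmu ω W t) * jg ω W t)
      ≤ (Real.exp (2 * jmu ω W s) - 1) / 2 := by
  have hh : ∀ t : ℝ, HasDerivAt (fun x => Real.exp (2 * jmu ω W x) / 2)
      (Real.exp (2 * jmu ω W t) * jg ω W t) t := by
    intro t
    have := (((jmu_hasDerivAt ω W hω hWc hWi t).const_mul 2).exp).div_const 2
    refine this.congr_deriv ?_
    ring
  have hIic := MeasureTheory.intervalIntegral_tendsto_integral_Iic s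
    (jge_int ω W hω hWc hWi).integrableOn (tendsto_id (α := ℝ))
  refine le_of_tendsto hIic ?_
  filter_upwards [eventually_le_atBot s] with r hr
  simp only [id_eq]
  have hft : (∫ t in r..s, Real.exp (2 * jmu ω W t) * jg ω W t)
      = Real.exp (2 * jmu ω W s) / 2 - Real.exp (2 * jmu ω W r) / 2 :=
    intervalIntegral.integral_eq_sub_of_hasDerivAt (fun t _ => hh t)
      ((jge_cont ω W hω hWc hWi).intervalIntegrable r s)
  rw [hft]
  have h1 : (1:ℝ) ≤ Real.exp (2 * jmu ω W r) := by
    rw [show (1:ℝ) = Real.exp 0 by simp]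
    exact Real.exp_le_exp.2 (by linarith [jmu_nonneg ω W hω hWc hWi r])
  linarith

end mu

lemma jost_phi_exists (ω : ℝ) (hω : ω ≠ 0) (W : ℝ → ℝ) (hWc : Continuous W)
    (hWi : Integrable W) :
    ∃ φ : ℝ → ℂ, Continuous φ ∧ (∃ C, ∀ t, ‖φ t‖ ≤ C) ∧ ∀ s : ℝ,
      φ s = 1 + (2*Complex.I*(ω:ℂ))⁻¹ *
        (Complex.exp (2*Complex.I*(ω:ℂ)*(s:ℂ)) *
           (∫ t in Iic s, Complex.exp (-(2*Complex.I*(ω:ℂ)*(t:ℂ))) * ((W t:ℂ) * φ t)) -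
         ∫ t in Iic s, (W t:ℂ) * φ t) := by
  -- basic norm facts
  have hne : ∀ z : ℂ, z.re = 0 → ‖Complex.exp z‖ = 1 := fun z hz => by
    rw [Complex.norm_exp, hz, Real.exp_zero]
  have hre1 : ∀ x : ℝ, ‖Complex.exp (2*Complex.I*(ω:ℂ)*(x:ℂ))‖ = 1 := fun x =>
    hne _ (by simp)
  have hre2 : ∀ x : ℝ, ‖Complex.exp (-(2*Complex.I*(ω:ℂ)*(x:ℂ)))‖ = 1 := fun x =>
    hne _ (by simp)
  have hn2 : ‖(2*Complex.I*(ω:ℂ))⁻¹‖ = (2*|ω|)⁻¹ := by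
    rw [norm_inv]; congr 1; simp [norm_mul]
  have hωpos : (0:ℝ) < |ω| := abs_pos.2 hω
  -- continuity/integrability of the integrands
  have hexpc : Continuous (fun t : ℝ => (Real.exp (2 * jmu ω W t) : ℂ)) :=
    Complex.continuous_ofReal.comp (Real.continuous_exp.comp
      (continuous_const.mul (jmu_cont ω W hω hWc hWi)))
  have hcexpc : Continuous (fun t : ℝ => Complex.exp (-(2*Complex.I*(ω:ℂ)*(t:ℂ)))) := by
    fun_prop
  have hAc : ∀ (u : ℝ → ℂ), Continuous u →
      Continuous (fun t => (W t:ℂ) * ((Real.exp (2 * jmu ω W t) : ℂ) * u t)) := by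
    intro u hu
    exact (Complex.continuous_ofReal.comp hWc).mul (hexpc.mul hu)
  have hAi : ∀ (u : ℝ → ℂ), Continuous u → ∀ C : ℝ, (∀ t, ‖u t‖ ≤ C) →
      Integrable (fun t => (W t:ℂ) * ((Real.exp (2 * jmu ω W t) : ℂ) * u t)) := by
    intro u hu C hC
    have h1 : Integrable (fun t => ((Real.exp (2 * jmu ω W t) : ℂ) * u t) * (W t:ℂ)) := by
      refine (hWi.ofReal).bdd_mul (c := Real.exp (2 * ∫ t, jg ω W t) * C) ((hexpc.mul hu).aestronglyMeasurable) ?_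
      refine ae_of_all _ fun t => ?_
      rw [norm_mul, Complex.norm_real, Real.norm_eq_abs, abs_of_pos (Real.exp_pos _)]
      refine mul_le_mul ?_ (hC t) (norm_nonneg _) (Real.exp_pos _).le
      exact Real.exp_le_exp.2 (by linarith [jmu_le ω W hω hWc hWi t])
    exact h1.congr (ae_of_all _ fun t => mul_comm _ _)
  have hBc : ∀ (u : ℝ → ℂ), Continuous u →
      Continuous (fun t : ℝ => Complex.exp (-(2*Complex.I*(ω:ℂ)*(t:ℂ))) *
        ((W t:ℂ) * ((Real.exp (2 * jmu ω W t) : ℂ) * u t))) := by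
    intro u hu
    exact hcexpc.mul (hAc u hu)
  have hBi : ∀ (u : ℝ → ℂ), Continuous u → ∀ C : ℝ, (∀ t, ‖u t‖ ≤ C) →
      Integrable (fun t : ℝ => Complex.exp (-(2*Complex.I*(ω:ℂ)*(t:ℂ))) *
        ((W t:ℂ) * ((Real.exp (2 * jmu ω W t) : ℂ) * u t))) := by
    intro u hu C hC
    exact (hAi u hu C hC).bdd_mul hcexpc.aestronglyMeasurable (c := 1) (ae_of_all _ fun t => (hre2 t).le)
  -- master estimate
  have hptA : ∀ (u : ℝ → ℂ) (C : ℝ), (∀ t, ‖u t‖ ≤ C) → ∀ t : ℝ,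
      ‖(W t:ℂ) * ((Real.exp (2 * jmu ω W t) : ℂ) * u t)‖
        ≤ (|ω| * C) * (Real.exp (2 * jmu ω W t) * jg ω W t) := by
    intro u C hC t
    have h1 : ‖(W t:ℂ) * ((Real.exp (2 * jmu ω W t) : ℂ) * u t)‖
        = |W t| * (Real.exp (2 * jmu ω W t) * ‖u t‖) := by
      rw [norm_mul, norm_mul, Complex.norm_real, Complex.norm_real, Real.norm_eq_abs,
        Real.norm_eq_abs, abs_of_pos (Real.exp_pos _)]
    rw [h1]
    have h2 : |W t| * (Real.exp (2 * jmu ω W t) * ‖u t‖)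
        ≤ |W t| * (Real.exp (2 * jmu ω W t) * C) := by
      refine mul_le_mul_of_nonneg_left ?_ (abs_nonneg _)
      exact mul_le_mul_of_nonneg_left (hC t) (Real.exp_pos _).le
    refine h2.trans (le_of_eq ?_)
    simp only [jg]
    field_simp
  have est : ∀ (u : ℝ → ℂ) (C : ℝ), (∀ t, ‖u t‖ ≤ C) → ∀ s : ℝ,
      ‖(2*Complex.I*(ω:ℂ))⁻¹ *
        (Complex.exp (2*Complex.I*(ω:ℂ)*(s:ℂ)) *
           (∫ t in Iic s, Complex.exp (-(2*Complex.I*(ω:ℂ)*(t:ℂ))) *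
             ((W t:ℂ) * ((Real.exp (2 * jmu ω W t) : ℂ) * u t))) -
         ∫ t in Iic s, (W t:ℂ) * ((Real.exp (2 * jmu ω W t) : ℂ) * u t))‖
        ≤ C * ∫ t in Iic s, Real.exp (2 * jmu ω W t) * jg ω W t := by
    intro u C hC s
    have hC0 : 0 ≤ C := le_trans (norm_nonneg _) (hC 0)
    have hKint : Integrable (fun t => (|ω| * C) * (Real.exp (2 * jmu ω W t) * jg ω W t))
        (volume.restrict (Iic s)) := ((jge_int ω W hω hWc hWi).restrict).const_mul _
    have hK0 : 0 ≤ ∫ t in Iic s, Real.exp (2 * jmu ω W t) * jg ω W t :=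
      setIntegral_nonneg measurableSet_Iic fun t _ =>
        mul_nonneg (Real.exp_pos _).le (jg_nonneg ω W hω hWc hWi t)
    have hA : ‖∫ t in Iic s, (W t:ℂ) * ((Real.exp (2 * jmu ω W t) : ℂ) * u t)‖
        ≤ (|ω| * C) * ∫ t in Iic s, Real.exp (2 * jmu ω W t) * jg ω W t := by
      have := norm_integral_le_of_norm_le hKint (ae_of_all _ (hptA u C hC))
      rwa [MeasureTheory.integral_const_mul] at this
    have hB : ‖∫ t in Iic s, Complex.exp (-(2*Complex.I*(ω:ℂ)*(t:ℂ))) *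
          ((W t:ℂ) * ((Real.exp (2 * jmu ω W t) : ℂ) * u t))‖
        ≤ (|ω| * C) * ∫ t in Iic s, Real.exp (2 * jmu ω W t) * jg ω W t := by
      have hpt : ∀ t : ℝ, ‖Complex.exp (-(2*Complex.I*(ω:ℂ)*(t:ℂ))) *
          ((W t:ℂ) * ((Real.exp (2 * jmu ω W t) : ℂ) * u t))‖
            ≤ (|ω| * C) * (Real.exp (2 * jmu ω W t) * jg ω W t) := by
        intro t
        rw [norm_mul, hre2 t, one_mul]
        exact hptA u C hC t
      have := norm_integral_le_of_norm_le hKint (ae_of_all _ hpt)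
      rwa [MeasureTheory.integral_const_mul] at this
    rw [norm_mul, hn2]
    calc (2*|ω|)⁻¹ * ‖Complex.exp (2*Complex.I*(ω:ℂ)*(s:ℂ)) *
           (∫ t in Iic s, Complex.exp (-(2*Complex.I*(ω:ℂ)*(t:ℂ))) *
             ((W t:ℂ) * ((Real.exp (2 * jmu ω W t) : ℂ) * u t))) -
         ∫ t in Iic s, (W t:ℂ) * ((Real.exp (2 * jmu ω W t) : ℂ) * u t)‖
        ≤ (2*|ω|)⁻¹ * (‖Complex.exp (2*Complex.I*(ω:ℂ)*(s:ℂ)) *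
           (∫ t in Iic s, Complex.exp (-(2*Complex.I*(ω:ℂ)*(t:ℂ))) *
             ((W t:ℂ) * ((Real.exp (2 * jmu ω W t) : ℂ) * u t)))‖ +
          ‖∫ t in Iic s, (W t:ℂ) * ((Real.exp (2 * jmu ω W t) : ℂ) * u t)‖) := by
          refine mul_le_mul_of_nonneg_left (norm_sub_le _ _) (by positivity)
      _ ≤ (2*|ω|)⁻¹ * ((|ω| * C) * (∫ t in Iic s, Real.exp (2 * jmu ω W t) * jg ω W t) +
          (|ω| * C) * (∫ t in Iic s, Real.exp (2 * jmu ω W t) * jg ω W t)) := by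
          refine mul_le_mul_of_nonneg_left (add_le_add ?_ hA) (by positivity)
          rw [norm_mul, hre1 s, one_mul]; exact hB
      _ = C * ∫ t in Iic s, Real.exp (2 * jmu ω W t) * jg ω W t := by
          field_simp
          ring
  -- the operator
  have hK0 : ∀ s : ℝ, 0 ≤ ∫ t in Iic s, Real.exp (2 * jmu ω W t) * jg ω W t := fun s =>
    setIntegral_nonneg measurableSet_Iic fun t _ =>
      mul_nonneg (Real.exp_pos _).le (jg_nonneg ω W hω hWc hWi t)
  have hKle : ∀ s : ℝ, (∫ t in Iic s, Real.exp (2 * jmu ω W t) * jg ω W t)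
      ≤ ∫ t, Real.exp (2 * jmu ω W t) * jg ω W t := fun s =>
    setIntegral_le_integral (jge_int ω W hω hWc hWi)
      (ae_of_all _ fun t => mul_nonneg (Real.exp_pos _).le (jg_nonneg ω W hω hWc hWi t))
  have hM2nonneg : 0 ≤ ∫ t, Real.exp (2 * jmu ω W t) * jg ω W t :=
    le_trans (hK0 0) (hKle 0)
  set T : (BoundedContinuousFunction ℝ ℂ) → ℝ → ℂ := fun ψ s =>
    (Real.exp (-(2 * jmu ω W s)) : ℂ) * (1 + (2*Complex.I*(ω:ℂ))⁻¹ *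
      (Complex.exp (2*Complex.I*(ω:ℂ)*(s:ℂ)) *
         (∫ t in Iic s, Complex.exp (-(2*Complex.I*(ω:ℂ)*(t:ℂ))) *
           ((W t:ℂ) * ((Real.exp (2 * jmu ω W t) : ℂ) * ψ t))) -
       ∫ t in Iic s, (W t:ℂ) * ((Real.exp (2 * jmu ω W t) : ℂ) * ψ t))) with hT
  have hexpnc : Continuous (fun s : ℝ => (Real.exp (-(2 * jmu ω W s)) : ℂ)) :=
    Complex.continuous_ofReal.comp (Real.continuous_exp.comp
      ((continuous_const.mul (jmu_cont ω W hω hWc hWi)).neg))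
  have hTcont : ∀ ψ, Continuous (T ψ) := by
    intro ψ
    rw [hT]
    refine hexpnc.mul (continuous_const.add (continuous_const.mul (Continuous.sub ?_ ?_)))
    · refine Continuous.mul (by fun_prop) ?_
      exact primitive_continuous _
        (hBi ψ ψ.continuous ‖ψ‖ ψ.norm_coe_le_norm) (hBc ψ ψ.continuous)
    · exact primitive_continuous _
        (hAi ψ ψ.continuous ‖ψ‖ ψ.norm_coe_le_norm) (hAc ψ ψ.continuous)
  have hexpn1 : ∀ s : ℝ, ‖(Real.exp (-(2 * jmu ω W s)) : ℂ)‖ ≤ 1 := by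
    intro s
    rw [Complex.norm_real, Real.norm_eq_abs, abs_of_pos (Real.exp_pos _)]
    rw [Real.exp_le_one_iff]
    linarith [jmu_nonneg ω W hω hWc hWi s]
  have hTbd : ∀ ψ, ∀ s, ‖T ψ s‖
      ≤ 1 + ‖ψ‖ * ∫ t, Real.exp (2 * jmu ω W t) * jg ω W t := by
    intro ψ s
    rw [hT, norm_mul]
    have h2 : ‖(1:ℂ) + (2*Complex.I*(ω:ℂ))⁻¹ *
        (Complex.exp (2*Complex.I*(ω:ℂ)*(s:ℂ)) *
           (∫ t in Iic s, Complex.exp (-(2*Complex.I*(ω:ℂ)*(t:ℂ))) *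
             ((W t:ℂ) * ((Real.exp (2 * jmu ω W t) : ℂ) * ψ t))) -
         ∫ t in Iic s, (W t:ℂ) * ((Real.exp (2 * jmu ω W t) : ℂ) * ψ t))‖
        ≤ 1 + ‖ψ‖ * ∫ t, Real.exp (2 * jmu ω W t) * jg ω W t := by
      refine (norm_add_le _ _).trans ?_
      rw [norm_one]
      have h3 := est ψ ‖ψ‖ ψ.norm_coe_le_norm s
      have h4 := mul_le_mul_of_nonneg_left (hKle s) (norm_nonneg ψ)
      linarith
    calc ‖(Real.exp (-(2 * jmu ω W s)) : ℂ)‖ * _ ≤ 1 * (1 + ‖ψ‖ * ∫ t, Real.exp (2 * jmu ω W t) * jg ω W t) :=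
          mul_le_mul (hexpn1 s) h2 (norm_nonneg _) zero_le_one
      _ = _ := one_mul _
  set S : BoundedContinuousFunction ℝ ℂ → BoundedContinuousFunction ℝ ℂ := fun ψ =>
    BoundedContinuousFunction.ofNormedAddCommGroup (T ψ) (hTcont ψ) _ (hTbd ψ) with hS
  have hScoe : ∀ ψ s, S ψ s = T ψ s := fun ψ s => rfl
  have hdist : ∀ ψ₁ ψ₂ : BoundedContinuousFunction ℝ ℂ, ∀ s : ℝ,
      dist (S ψ₁ s) (S ψ₂ s) ≤ (1/2) * dist ψ₁ ψ₂ := by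
    intro ψ₁ ψ₂ s
    have hiA : (∫ t in Iic s, (W t:ℂ) * ((Real.exp (2 * jmu ω W t) : ℂ) * ψ₁ t)) -
        (∫ t in Iic s, (W t:ℂ) * ((Real.exp (2 * jmu ω W t) : ℂ) * ψ₂ t)) =
        ∫ t in Iic s, (W t:ℂ) * ((Real.exp (2 * jmu ω W t) : ℂ) * (ψ₁ t - ψ₂ t)) := by
      rw [← integral_sub (hAi ψ₁ ψ₁.continuous ‖ψ₁‖ ψ₁.norm_coe_le_norm).integrableOn
        (hAi ψ₂ ψ₂.continuous ‖ψ₂‖ ψ₂.norm_coe_le_norm).integrableOn]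
      congr 1; funext t; ring
    have hiB : (∫ t in Iic s, Complex.exp (-(2*Complex.I*(ω:ℂ)*(t:ℂ))) *
          ((W t:ℂ) * ((Real.exp (2 * jmu ω W t) : ℂ) * ψ₁ t))) -
        (∫ t in Iic s, Complex.exp (-(2*Complex.I*(ω:ℂ)*(t:ℂ))) *
          ((W t:ℂ) * ((Real.exp (2 * jmu ω W t) : ℂ) * ψ₂ t))) =
        ∫ t in Iic s, Complex.exp (-(2*Complex.I*(ω:ℂ)*(t:ℂ))) *
          ((W t:ℂ) * ((Real.exp (2 * jmu ω W t) : ℂ) * (ψ₁ t - ψ₂ t))) := by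
      rw [← integral_sub (hBi ψ₁ ψ₁.continuous ‖ψ₁‖ ψ₁.norm_coe_le_norm).integrableOn
        (hBi ψ₂ ψ₂.continuous ‖ψ₂‖ ψ₂.norm_coe_le_norm).integrableOn]
      congr 1; funext t; ring
    have heq : S ψ₁ s - S ψ₂ s = (Real.exp (-(2 * jmu ω W s)) : ℂ) *
        ((2*Complex.I*(ω:ℂ))⁻¹ * (Complex.exp (2*Complex.I*(ω:ℂ)*(s:ℂ)) *
           (∫ t in Iic s, Complex.exp (-(2*Complex.I*(ω:ℂ)*(t:ℂ))) *
             ((W t:ℂ) * ((Real.exp (2 * jmu ω W t) : ℂ) * (ψ₁ t - ψ₂ t)))) -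
         ∫ t in Iic s, (W t:ℂ) * ((Real.exp (2 * jmu ω W t) : ℂ) * (ψ₁ t - ψ₂ t)))) := by
      rw [hScoe, hScoe, hT, ← hiA, ← hiB]
      ring
    rw [dist_eq_norm, heq, norm_mul]
    have hCd : ∀ t : ℝ, ‖ψ₁ t - ψ₂ t‖ ≤ dist ψ₁ ψ₂ := by
      intro t
      rw [← dist_eq_norm]
      exact BoundedContinuousFunction.dist_coe_le_dist t
    have h5 := est (fun t => ψ₁ t - ψ₂ t) (dist ψ₁ ψ₂) hCd s
    have hkey := jge_key ω W hω hWc hWi s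
    have hd0 : 0 ≤ dist ψ₁ ψ₂ := dist_nonneg
    have hEX : Real.exp (-(2 * jmu ω W s)) * Real.exp (2 * jmu ω W s) = 1 := by
      rw [← Real.exp_add]; simp
    have hEpos : 0 < Real.exp (-(2 * jmu ω W s)) := Real.exp_pos _
    have hEnorm : ‖(Real.exp (-(2 * jmu ω W s)) : ℂ)‖ = Real.exp (-(2 * jmu ω W s)) := by
      rw [Complex.norm_real, Real.norm_eq_abs, abs_of_pos hEpos]
    rw [hEnorm]
    have h6 : ‖(2*Complex.I*(ω:ℂ))⁻¹ * (Complex.exp (2*Complex.I*(ω:ℂ)*(s:ℂ)) *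
           (∫ t in Iic s, Complex.exp (-(2*Complex.I*(ω:ℂ)*(t:ℂ))) *
             ((W t:ℂ) * ((Real.exp (2 * jmu ω W t) : ℂ) * (ψ₁ t - ψ₂ t)))) -
         ∫ t in Iic s, (W t:ℂ) * ((Real.exp (2 * jmu ω W t) : ℂ) * (ψ₁ t - ψ₂ t)))‖
        ≤ dist ψ₁ ψ₂ * ((Real.exp (2 * jmu ω W s) - 1) / 2) :=
      h5.trans (mul_le_mul_of_nonneg_left hkey hd0)
    have h7 := mul_le_mul_of_nonneg_left h6 hEpos.le
    refine h7.trans ?_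
    nlinarith [hEX, hEpos, hd0, hexpn1 s]
  have hcontr : ContractingWith (1/2 : NNReal) S := by
    constructor
    · rw [← NNReal.coe_lt_coe]; norm_num
    · refine LipschitzWith.of_dist_le_mul fun ψ₁ ψ₂ => ?_
      have hc : ((1/2 : NNReal) : ℝ) = 1/2 := by norm_num
      rw [hc]
      refine (BoundedContinuousFunction.dist_le (by positivity)).2 fun s => hdist ψ₁ ψ₂ s
  set ψ : BoundedContinuousFunction ℝ ℂ := ContractingWith.fixedPoint S hcontr with hψdef
  have hfix : S ψ = ψ := hcontr.fixedPoint_isFixedPt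
  have hEE : ∀ s : ℝ, (Real.exp (2 * jmu ω W s) : ℂ) * (Real.exp (-(2 * jmu ω W s)) : ℂ) = 1 := by
    intro s
    rw [← Complex.ofReal_mul, ← Real.exp_add]
    norm_num
  refine ⟨fun s => (Real.exp (2 * jmu ω W s) : ℂ) * ψ s, hexpc.mul ψ.continuous,
    ⟨Real.exp (2 * ∫ t, jg ω W t) * ‖ψ‖, fun t => ?_⟩, fun s => ?_⟩
  · rw [norm_mul, Complex.norm_real, Real.norm_eq_abs, abs_of_pos (Real.exp_pos _)]
    refine mul_le_mul ?_ (ψ.norm_coe_le_norm t) (norm_nonneg _) (Real.exp_pos _).le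
    exact Real.exp_le_exp.2 (by linarith [jmu_le ω W hω hWc hWi t])
  · have h1 : ψ s = T ψ s := by
      conv_lhs => rw [← hfix]
      exact hScoe ψ s
    show (Real.exp (2 * jmu ω W s) : ℂ) * ψ s = _
    rw [h1, hT, ← mul_assoc, hEE, one_mul]

/-- Existence of the Jost solution at `−∞` of `η'' + ω²η = Wη` for real
nonzero `ω` and continuous integrable potential `W`: there is a `C²` solution `η` with
`e^{iωs}η(s) → 1` and `(e^{iωs}η(s))' → 0` as `s → −∞`. -/
theorem jost_solution_exists
    (ω : ℝ) (hω : ω ≠ 0) (W : ℝ → ℝ) (hWc : Continuous W) (hWi : Integrable W) :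
    ∃ η : ℝ → ℂ, ContDiff ℝ 2 η ∧
      (∀ s : ℝ, deriv (deriv η) s + (ω : ℂ) ^ 2 * η s = (W s : ℂ) * η s) ∧
      Tendsto (fun s : ℝ => Complex.exp (Complex.I * ω * s) * η s) atBot (𝓝 1) ∧
      Tendsto (deriv fun s : ℝ => Complex.exp (Complex.I * ω * s) * η s) atBot (𝓝 0) := by
  obtain ⟨φ, hφc, ⟨Cφ, hφb⟩, hφeq⟩ := jost_phi_exists ω hω W hWc hWi
  have h2ne : (2*Complex.I*(ω:ℂ)) ≠ 0 := by simp [Complex.I_ne_zero, hω]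
  have hre1 : ∀ x : ℝ, ‖Complex.exp (2*Complex.I*(ω:ℂ)*(x:ℂ))‖ = 1 := fun x => by
    rw [Complex.norm_exp, show (2*Complex.I*(ω:ℂ)*(x:ℂ)).re = 0 by simp,
      Real.exp_zero]
  have hre2 : ∀ x : ℝ, ‖Complex.exp (-(2*Complex.I*(ω:ℂ)*(x:ℂ)))‖ = 1 := fun x => by
    rw [Complex.norm_exp,
      show (-(2*Complex.I*(ω:ℂ)*(x:ℂ))).re = 0 by simp, Real.exp_zero]
  -- the integrands
  have hWφc : Continuous (fun t : ℝ => (W t:ℂ) * φ t) :=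
    (Complex.continuous_ofReal.comp hWc).mul hφc
  have hWφi : Integrable (fun t : ℝ => (W t:ℂ) * φ t) := by
    have h1 : Integrable (fun t : ℝ => φ t * (W t:ℂ)) :=
      (hWi.ofReal).bdd_mul hφc.aestronglyMeasurable (c := Cφ) (ae_of_all _ hφb)
    exact h1.congr (ae_of_all _ fun t => mul_comm _ _)
  have hcexpc : Continuous (fun t : ℝ => Complex.exp (-(2*Complex.I*(ω:ℂ)*(t:ℂ)))) := by
    fun_prop
  have hBφc : Continuous (fun t : ℝ => Complex.exp (-(2*Complex.I*(ω:ℂ)*(t:ℂ))) *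
      ((W t:ℂ) * φ t)) := hcexpc.mul hWφc
  have hBφi : Integrable (fun t : ℝ => Complex.exp (-(2*Complex.I*(ω:ℂ)*(t:ℂ))) *
      ((W t:ℂ) * φ t)) :=
    hWφi.bdd_mul hcexpc.aestronglyMeasurable (c := 1) (ae_of_all _ fun t => (hre2 t).le)
  -- the primitives
  set a : ℝ → ℂ := fun s => ∫ t in Iic s, (W t:ℂ) * φ t with hadef
  set b : ℝ → ℂ := fun s => ∫ t in Iic s,
    Complex.exp (-(2*Complex.I*(ω:ℂ)*(t:ℂ))) * ((W t:ℂ) * φ t) with hbdef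
  have ha' : ∀ s : ℝ, HasDerivAt a ((W s:ℂ) * φ s) s := fun s =>
    primitive_hasDerivAt _ hWφi hWφc s
  have hb' : ∀ s : ℝ, HasDerivAt b
      (Complex.exp (-(2*Complex.I*(ω:ℂ)*(s:ℂ))) * ((W s:ℂ) * φ s)) s := fun s =>
    primitive_hasDerivAt _ hBφi hBφc s
  have hbc : Continuous b := primitive_continuous _ hBφi hBφc
  have hφeq' : φ = fun s : ℝ => 1 + (2*Complex.I*(ω:ℂ))⁻¹ *
      (Complex.exp (2*Complex.I*(ω:ℂ)*(s:ℂ)) * b s - a s) := funext fun s => hφeq s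
  -- exponential derivatives
  have hE2' : ∀ s : ℝ, HasDerivAt (fun x : ℝ => Complex.exp (2*Complex.I*(ω:ℂ)*(x:ℂ)))
      (Complex.exp (2*Complex.I*(ω:ℂ)*(s:ℂ)) * (2*Complex.I*(ω:ℂ))) s := by
    intro s
    have h0 : HasDerivAt (fun x : ℝ => 2*Complex.I*(ω:ℂ)*(x:ℂ)) (2*Complex.I*(ω:ℂ)) s := by
      simpa using (Complex.ofRealCLM.hasDerivAt (x := s)).const_mul (2*Complex.I*(ω:ℂ))
    simpa using h0.cexp
  have hE1' : ∀ s : ℝ, HasDerivAt (fun x : ℝ => Complex.exp (-(Complex.I*(ω:ℂ)*(x:ℂ))))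
      (Complex.exp (-(Complex.I*(ω:ℂ)*(s:ℂ))) * (-(Complex.I*(ω:ℂ)))) s := by
    intro s
    have h0 : HasDerivAt (fun x : ℝ => -(Complex.I*(ω:ℂ)*(x:ℂ))) (-(Complex.I*(ω:ℂ))) s := by
      simpa using ((Complex.ofRealCLM.hasDerivAt (x := s)).const_mul (-(Complex.I*(ω:ℂ))))
    simpa using h0.cexp
  have hprod : ∀ s : ℝ, Complex.exp (2*Complex.I*(ω:ℂ)*(s:ℂ)) *
      Complex.exp (-(2*Complex.I*(ω:ℂ)*(s:ℂ))) = 1 := fun s => by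
    rw [← Complex.exp_add]; simp
  have hcinv : (2*Complex.I*(ω:ℂ))⁻¹ * (2*Complex.I*(ω:ℂ)) = 1 := inv_mul_cancel₀ h2ne
  -- derivative of φ
  set φ1 : ℝ → ℂ := fun s => Complex.exp (2*Complex.I*(ω:ℂ)*(s:ℂ)) * b s with hφ1def
  have hφ' : ∀ s : ℝ, HasDerivAt φ (φ1 s) s := by
    intro s
    rw [hφeq']
    have h := (((hE2' s).mul (hb' s)).sub (ha' s)).const_mul
      ((2*Complex.I*(ω:ℂ))⁻¹) |>.const_add 1
    refine h.congr_deriv ?_; symm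
    rw [hφ1def]
    linear_combination (Complex.exp (2*Complex.I*(ω:ℂ)*(s:ℂ)) * b s) * hcinv.symm -
      ((2*Complex.I*(ω:ℂ))⁻¹ * ((W s:ℂ) * φ s)) * (hprod s)
  have hφ1' : ∀ s : ℝ, HasDerivAt φ1 (2*Complex.I*(ω:ℂ) * φ1 s + (W s:ℂ) * φ s) s := by
    intro s
    have h := (hE2' s).mul (hb' s)
    rw [hφ1def]
    refine h.congr_deriv ?_; symm
    simp only [hφ1def]
    linear_combination (-((W s:ℂ) * φ s)) * (hprod s)
  have hφ1c : Continuous φ1 := by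
    rw [hφ1def]; exact (by fun_prop : Continuous (fun s : ℝ =>
      Complex.exp (2*Complex.I*(ω:ℂ)*(s:ℂ)))).mul hbc
  -- η and its derivatives
  set η : ℝ → ℂ := fun s => Complex.exp (-(Complex.I*(ω:ℂ)*(s:ℂ))) * φ s with hηdef
  set η1 : ℝ → ℂ := fun s => Complex.exp (-(Complex.I*(ω:ℂ)*(s:ℂ))) *
    (φ1 s - Complex.I*(ω:ℂ) * φ s) with hη1def
  have hη' : ∀ s : ℝ, HasDerivAt η (η1 s) s := by
    intro s
    have h := (hE1' s).mul (hφ' s)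
    rw [hηdef, hη1def]
    refine h.congr_deriv ?_; symm
    ring
  have hη1' : ∀ s : ℝ, HasDerivAt η1 (Complex.exp (-(Complex.I*(ω:ℂ)*(s:ℂ))) *
      ((W s:ℂ) * φ s - (ω:ℂ)^2 * φ s)) s := by
    intro s
    have h := (hE1' s).mul ((hφ1' s).sub ((hφ' s).const_mul (Complex.I*(ω:ℂ))))
    rw [hη1def]
    refine h.congr_deriv ?_; symm
    simp only [Pi.sub_apply, hφ1def]
    have hI : (Complex.I : ℂ)^2 = -1 := Complex.I_sq
    linear_combination (-(Complex.exp (-(Complex.I*(ω:ℂ)*(s:ℂ))) * φ s * (ω:ℂ)^2)) * hI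
  have hderiv_η : deriv η = η1 := funext fun s => (hη' s).deriv
  have hderiv2 : ∀ s : ℝ, deriv (deriv η) s = Complex.exp (-(Complex.I*(ω:ℂ)*(s:ℂ))) *
      ((W s:ℂ) * φ s - (ω:ℂ)^2 * φ s) := by
    intro s
    rw [hderiv_η]
    exact (hη1' s).deriv
  have hcoeφ : (fun s : ℝ => Complex.exp (Complex.I * (ω:ℂ) * (s:ℂ)) * η s) = φ := by
    funext s
    rw [hηdef]
    simp only
    rw [← mul_assoc, ← Complex.exp_add]
    simp
  refine ⟨η, ?_, ?_, ?_, ?_⟩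
  · -- C²
    have hd1 : Differentiable ℝ η := fun s => (hη' s).differentiableAt
    have hd2 : ContDiff ℝ 1 (deriv η) := by
      rw [hderiv_η, contDiff_one_iff_deriv]
      constructor
      · exact fun s => (hη1' s).differentiableAt
      · have : deriv η1 = fun s : ℝ => Complex.exp (-(Complex.I*(ω:ℂ)*(s:ℂ))) *
            ((W s:ℂ) * φ s - (ω:ℂ)^2 * φ s) := funext fun s => (hη1' s).deriv
        rw [this]
        exact (by fun_prop : Continuous (fun s : ℝ =>
          Complex.exp (-(Complex.I*(ω:ℂ)*(s:ℂ))))).mul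
          (((Complex.continuous_ofReal.comp hWc).mul hφc).sub (continuous_const.mul hφc))
    rw [show (2 : WithTop ℕ∞) = 1 + 1 from rfl, contDiff_succ_iff_deriv]
    exact ⟨hd1, fun h => (WithTop.one_ne_top h).elim, hd2⟩
  · -- the ODE
    intro s
    rw [hderiv2 s, hηdef]
    simp only
    ring
  · -- limit of e^{iωs} η
    rw [hcoeφ, hφeq']
    have hta : Tendsto a atBot (𝓝 0) := primitive_tendsto_atBot _ hWφi
    have htb : Tendsto b atBot (𝓝 0) := primitive_tendsto_atBot _ hBφi
    have htE2b : Tendsto (fun s : ℝ => Complex.exp (2*Complex.I*(ω:ℂ)*(s:ℂ)) * b s)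
        atBot (𝓝 0) := by
      rw [tendsto_zero_iff_norm_tendsto_zero]
      have : (fun s : ℝ => ‖Complex.exp (2*Complex.I*(ω:ℂ)*(s:ℂ)) * b s‖)
          = fun s => ‖b s‖ := funext fun s => by rw [norm_mul, hre1 s, one_mul]
      rw [this]
      exact tendsto_zero_iff_norm_tendsto_zero.1 htb
    have h := (tendsto_const_nhds (x := (1:ℂ)) (f := atBot (α := ℝ))).add
      (((htE2b.sub hta).const_mul ((2*Complex.I*(ω:ℂ))⁻¹)))
    simpa using h
  · -- limit of the derivative
    rw [hcoeφ]
    have : deriv φ = φ1 := funext fun s => (hφ' s).deriv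
    rw [this, hφ1def]
    rw [tendsto_zero_iff_norm_tendsto_zero]
    have htb : Tendsto b atBot (𝓝 0) := primitive_tendsto_atBot _ hBφi
    have heq : (fun s : ℝ => ‖Complex.exp (2*Complex.I*(ω:ℂ)*(s:ℂ)) * b s‖)
        = fun s => ‖b s‖ := funext fun s => by rw [norm_mul, hre1 s, one_mul]
    rw [heq]
    exact tendsto_zero_iff_norm_tendsto_zero.1 htb
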